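/- Let n ≥ 3 and let M : Fin n → Fin n → Bool be an absorbing state of the binary trust gossip model. Suppose agent i has at least one one-way trust target, and let T = {j | i ▷ j} be the set of all one-way trust targets of i. Then: (a) any two distinct members of T share mutual trust (for all j, k ∈ T with j ≠ k, j ∼ k); (b) T is closed under mutual trust (if j ∈ T and j ∼ k with k ≠ i, then k ∈ T); and (c) no member of T has any outgoing one-way trust relation. -/
import Mathlib


/-- A state `M` is absorbing if for all pairwise distinct agents `a z y`,
if `z` trusts `a` then `z` already agrees with `a` about `y`. -/
def Absorbing {n : ℕ} (M : Fin n → Fin n → Bool) : Prop :=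
  ∀ a z y : Fin n, a ≠ z → a ≠ y → z ≠ y → M z a = true → M z y = M a y

/-- The set of one-way trust targets of agent `i`. -/
def oneWayTargets {n : ℕ} (M : Fin n → Fin n → Bool) (i : Fin n) : Set (Fin n) :=
  {j | j ≠ i ∧ M i j = true ∧ M j i = false}

/-- Structure of the set `T` of one-way trust targets of an agent in an absorbing
state: (a) any two distinct members of `T` share mutual trust; (b) `T` is closed
under mutual trust; (c) no member of `T` has any outgoing one-way trust relation. -/
theorem oneway_target_set_structure {n : ℕ} (hn : 3 ≤ n) (M : Fin n → Fin n → Bool)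
    (hdiag : ∀ i, M i i = false) (habs : Absorbing M)
    (i : Fin n) (hne : (oneWayTargets M i).Nonempty) :
    (∀ j ∈ oneWayTargets M i, ∀ k ∈ oneWayTargets M i, j ≠ k →
        M j k = true ∧ M k j = true) ∧
    (∀ j ∈ oneWayTargets M i, ∀ k : Fin n, k ≠ i → k ≠ j →
        (M j k = true ∧ M k j = true) → k ∈ oneWayTargets M i) ∧
    (∀ j ∈ oneWayTargets M i, ¬ ∃ k : Fin n, k ≠ j ∧ M j k = true ∧ M k j = false) := by
  have ha : ∀ j ∈ oneWayTargets M i, ∀ k ∈ oneWayTargets M i, j ≠ k →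
      M j k = true ∧ M k j = true := by
    rintro j ⟨hji, hij, hjiF⟩ k ⟨hki, hik, hkiF⟩ hjk
    constructor
    · have := habs j i k hji hjk (Ne.symm hki) hij
      rw [← this]; exact hik
    · have := habs k i j hki (Ne.symm hjk) (Ne.symm hji) hik
      rw [← this]; exact hij
  refine ⟨ha, ?_, ?_⟩
  · rintro j ⟨hji, hij, hjiF⟩ k hki hkj ⟨hjk, hkjT⟩
    refine ⟨hki, ?_, ?_⟩
    · have := habs j i k hji (fun h => hkj h.symm) (Ne.symm hki) hij
      rw [this]; exact hjk
    · have := habs j k i (Ne.symm hkj) hji hki hkjT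
      rw [this]; exact hjiF
  · rintro j hj ⟨k, hkj, hjk, hkjF⟩
    obtain ⟨hji, hij, hjiF⟩ := hj
    have hki : k ≠ i := by
      rintro rfl; rw [hjk] at hjiF; exact Bool.noConfusion hjiF
    have hmem : k ∈ oneWayTargets M i := by
      refine ⟨hki, ?_, ?_⟩
      · have := habs j i k hji (Ne.symm hkj) (Ne.symm hki) hij
        rw [this]; exact hjk
      · have := habs k j i hkj hki hji hjk
        rw [← this]; exact hjiF
    have := (ha j ⟨hji, hij, hjiF⟩ k hmem (Ne.symm hkj)).2
    rw [this] at hkjF; exact Bool.noConfusion hkjF
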